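/- arXiv:0801.4665 — 2 statements merged into one kernel-verified Lean document; each statement's English description precedes it below -/
import Mathlib

section
/- Define a sequence of multisets W(m,n) of positive integers for relatively prime positive integers m < n by the following Euclidean-type algorithm: set p₀ = n, p₁ = m; at step i ≥ 1 write pᵢ₋₁ = aᵢ·pᵢ + pᵢ₊₁ with 0 ≤ pᵢ₊₁ < pᵢ, and include aᵢ copies of pᵢ in W(m,n); stop when some pᵢ = 0. Then the sum of the squares of the elements of W(m,n) equals m·n. -/
/-- The weight multiset of the Euclidean algorithm applied to the pair `(n, m)` (so `p₀ = n`,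
`p₁ = m`): at each step with current pair `(n, m)`, `m ≠ 0`, we record `n / m` copies of `m`
and continue with `(m, n % m)`, stopping when the remainder is `0`. -/
def W : ℕ → ℕ → Multiset ℕ
  | _, 0 => 0
  | n, (m + 1) => Multiset.replicate (n / (m + 1)) (m + 1) + W (m + 1) (n % (m + 1))
termination_by n m => m
decreasing_by exact Nat.mod_lt _ (Nat.succ_pos m)

lemma W_sum_sq (m : ℕ) : ∀ n, ((W n m).map (fun w => w ^ 2)).sum = m * n := by
  induction m using Nat.strong_induction_on with
  | _ m ih =>
    intro n
    match m with
    | 0 => simp [W]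
    | m + 1 =>
      rw [W]
      have hlt : n % (m + 1) < m + 1 := Nat.mod_lt _ (Nat.succ_pos m)
      simp only [Multiset.map_add, Multiset.sum_add, Multiset.map_replicate,
        Multiset.sum_replicate, ih _ hlt]
      have := Nat.div_add_mod n (m + 1)
      rw [smul_eq_mul]; nlinarith [this]

/-- For relatively prime positive integers `m < n`, the sum of the squares of the weights in
`W(m,n)` equals `m·n`. -/
theorem stmt4 (m n : ℕ) (h0 : 0 < m) (hmn : m < n) (hcop : Nat.Coprime m n) :
    ((W n m).map (fun w => w ^ 2)).sum = m * n := by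
  exact W_sum_sq m n
end

section
/- Let a_λ(dL − ∑_{i=1}^{8} mᵢEᵢ) = 3d − (m₁+m₂+m₃) − λ(m₄+⋯+m₈). Then a_λ is positive on all classes of the forms Eᵢ; L − Eᵢ − Eⱼ; 2L minus five distinct Eᵢ's; 3L − 2Eᵢ − (six other Eⱼ's); 4L − 2(Eᵢ+Eⱼ+E_k) − (five other E's); 5L − 2(six E's) − (two other E's); and 6L − 3Eᵢ − 2(the other seven E's), for all choices of distinct indices in {1,…,8}, if and only if 0 < λ < 12/11. -/
open Finset

/-- The values of `a_λ` on `E₁, …, E₈` in the 8-point blow up: `a_λ(Eᵢ) = 1` for the first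
three indices and `a_λ(Eᵢ) = λ` for the last five, so that
`a_λ(dL − ∑mᵢEᵢ) = 3d − (m₁+m₂+m₃) − λ(m₄+⋯+m₈)`. -/
noncomputable def wgt8 (lam : ℝ) : Fin 8 → ℝ := fun i => if (i : ℕ) < 3 then 1 else lam

lemma sum_univ_wgt8 (lam : ℝ) : ∑ i : Fin 8, wgt8 lam i = 3 + 5 * lam := by
  have h : ∀ k : Fin 8, 3 ≤ (k:ℕ) → wgt8 lam k = lam := by
    intro k hk
    simp only [wgt8]
    rw [if_neg (by omega)]
  rw [Fin.sum_univ_eight, h 3 (by decide), h 4 (by decide), h 5 (by decide),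
    h 6 (by decide), h 7 (by decide)]
  norm_num [wgt8]
  ring

lemma sum_wgt8 (lam : ℝ) (S : Finset (Fin 8)) :
    ∃ a b : ℕ, a ≤ 3 ∧ b ≤ 5 ∧ a + b = S.card ∧
      ∑ i ∈ S, wgt8 lam i = a + lam * b := by
  refine ⟨(S.filter (fun i : Fin 8 => (i:ℕ) < 3)).card, (S.filter (fun i : Fin 8 => ¬(i:ℕ) < 3)).card,
    ?_, ?_, ?_, ?_⟩
  · calc (S.filter (fun i : Fin 8 => (i:ℕ) < 3)).card
        ≤ (univ.filter (fun i : Fin 8 => (i:ℕ) < 3)).card :=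
          card_le_card (filter_subset_filter _ (subset_univ S))
      _ = 3 := by decide
  · calc (S.filter (fun i : Fin 8 => ¬(i:ℕ) < 3)).card
        ≤ (univ.filter (fun i : Fin 8 => ¬(i:ℕ) < 3)).card :=
          card_le_card (filter_subset_filter _ (subset_univ S))
      _ = 5 := by decide
  · exact Finset.card_filter_add_card_filter_not _
  · rw [← Finset.sum_filter_add_sum_filter_not S (fun i : Fin 8 => (i:ℕ) < 3)]
    have h1 : ∑ i ∈ S.filter (fun i : Fin 8 => (i:ℕ) < 3), wgt8 lam i
        = ((S.filter (fun i : Fin 8 => (i:ℕ) < 3)).card : ℝ) := by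
      rw [Finset.sum_congr rfl (fun i hi => ?_), Finset.sum_const, nsmul_eq_mul, mul_one]
      simp [wgt8, (Finset.mem_filter.mp hi).2]
    have h2 : ∑ i ∈ S.filter (fun i : Fin 8 => ¬(i:ℕ) < 3), wgt8 lam i
        = lam * ((S.filter (fun i : Fin 8 => ¬(i:ℕ) < 3)).card : ℝ) := by
      rw [Finset.sum_congr rfl (fun i hi => ?_), Finset.sum_const, nsmul_eq_mul, mul_comm]
      simp [wgt8, (Finset.mem_filter.mp hi).2]
    rw [h1, h2]

/-- `a_λ` is positive on all classes of the forms `Eᵢ`; `L − Eᵢ − Eⱼ`; `2L` minus five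
distinct `E`'s; `3L − 2Eᵢ` minus six others; `4L − 2(three E's)` minus the other five;
`5L − 2(six E's)` minus the other two; `6L − 3Eᵢ − 2(the other seven)`, for all choices of
distinct indices in `{1,…,8}`, if and only if `0 < λ < 12/11`. -/
theorem stmt10 (lam : ℝ) :
    ((∀ i : Fin 8, 0 < wgt8 lam i) ∧
     (∀ i j : Fin 8, i ≠ j → 0 < 3 - wgt8 lam i - wgt8 lam j) ∧
     (∀ S : Finset (Fin 8), S.card = 5 → 0 < 6 - ∑ i ∈ S, wgt8 lam i) ∧
     (∀ (i : Fin 8) (S : Finset (Fin 8)), S.card = 6 → i ∉ S →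
        0 < 9 - 2 * wgt8 lam i - ∑ j ∈ S, wgt8 lam j) ∧
     (∀ S : Finset (Fin 8), S.card = 3 →
        0 < 12 - 2 * ∑ i ∈ S, wgt8 lam i - ∑ j ∈ Sᶜ, wgt8 lam j) ∧
     (∀ S : Finset (Fin 8), S.card = 6 →
        0 < 15 - 2 * ∑ i ∈ S, wgt8 lam i - ∑ j ∈ Sᶜ, wgt8 lam j) ∧
     (∀ i : Fin 8, 0 < 18 - 3 * wgt8 lam i - 2 * ∑ j ∈ Finset.univ \ {i}, wgt8 lam j))
    ↔ (0 < lam ∧ lam < 12 / 11) := by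
  have hw : ∀ i : Fin 8, wgt8 lam i = 1 ∨ wgt8 lam i = lam := by
    intro i; unfold wgt8; split
    · exact Or.inl rfl
    · exact Or.inr rfl
  have h3 : wgt8 lam 3 = lam := by
    simp only [wgt8]; rw [if_neg (by decide)]
  constructor
  · rintro ⟨h1, -, -, -, -, -, h7⟩
    have hpos : 0 < lam := h3 ▸ h1 3
    refine ⟨hpos, ?_⟩
    have := h7 3
    rw [Finset.sum_sdiff_eq_sub (Finset.subset_univ {3}), Finset.sum_singleton,
      sum_univ_wgt8, h3] at this
    linarith
  · rintro ⟨h0, h11⟩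
    refine ⟨?_, ?_, ?_, ?_, ?_, ?_, ?_⟩
    · intro i; rcases hw i with h | h <;> rw [h] <;> linarith
    · intro i j _
      rcases hw i with h | h <;> rcases hw j with h' | h' <;> rw [h, h'] <;> linarith
    · intro S hS
      obtain ⟨a, b, ha, hb, hab, hsum⟩ := sum_wgt8 lam S
      rw [hS] at hab
      rw [hsum]
      interval_cases a <;> interval_cases b <;> first | omega | (push_cast; linarith)
    · intro i S hS hiS
      obtain ⟨a, b, ha, hb, hab, hsum⟩ := sum_wgt8 lam S
      rw [hS] at hab
      rw [hsum]
      rcases hw i with h | h <;> rw [h] <;>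
        (interval_cases a <;> interval_cases b <;> first | omega | (push_cast; linarith))
    · intro S hS
      obtain ⟨a, b, ha, hb, hab, hsum⟩ := sum_wgt8 lam S
      have hc : ∑ j ∈ Sᶜ, wgt8 lam j = (3 + 5 * lam) - ∑ i ∈ S, wgt8 lam i := by
        have h := Finset.sum_add_sum_compl S (wgt8 lam)
        rw [sum_univ_wgt8] at h
        linarith
      rw [hS] at hab
      rw [hc, hsum]
      interval_cases a <;> interval_cases b <;> first | omega | (push_cast; linarith)
    · intro S hS
      obtain ⟨a, b, ha, hb, hab, hsum⟩ := sum_wgt8 lam S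
      have hc : ∑ j ∈ Sᶜ, wgt8 lam j = (3 + 5 * lam) - ∑ i ∈ S, wgt8 lam i := by
        have h := Finset.sum_add_sum_compl S (wgt8 lam)
        rw [sum_univ_wgt8] at h
        linarith
      rw [hS] at hab
      rw [hc, hsum]
      interval_cases a <;> interval_cases b <;> first | omega | (push_cast; linarith)
    · intro i
      rw [Finset.sum_sdiff_eq_sub (Finset.subset_univ {i}), Finset.sum_singleton,
        sum_univ_wgt8]
      rcases hw i with h | h <;> rw [h] <;> linarith
end
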